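/- Let X be an operator on H^{⊗N}. If the function ρ ↦ Tr[X ρ^{⊗N}] vanishes for all density operators ρ on H, then the symmetrization (1/N!) ∑_{σ∈S_N} Π_σ X Π_σ† = 0. -/

import Mathlib

open Matrix BigOperators Finset
open scoped ComplexOrder

/-- N-fold tensor power of a matrix (operator on H^{⊗N} with H = ℂ^d). -/
def tensorPow {d N : ℕ} (ρ : Matrix (Fin d) (Fin d) ℂ) :
    Matrix (Fin N → Fin d) (Fin N → Fin d) ℂ :=
  Matrix.of fun f g => ∏ i, ρ (f i) (g i)

/-- Conjugation Π_σ X Π_σ† of an operator on H^{⊗N} by the unitary permuting tensor factors. -/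
def permAction {d N : ℕ} (σ : Equiv.Perm (Fin N))
    (X : Matrix (Fin N → Fin d) (Fin N → Fin d) ℂ) :
    Matrix (Fin N → Fin d) (Fin N → Fin d) ℂ :=
  Matrix.of fun f g => X (f ∘ σ) (g ∘ σ)

/-- Density operator: positive semidefinite with unit trace. -/
def IsDensity {d : ℕ} (ρ : Matrix (Fin d) (Fin d) ℂ) : Prop :=
  ρ.PosSemidef ∧ ρ.trace = 1

/-- A^{(k)} = I^{⊗(k-1)} ⊗ A ⊗ I^{⊗(N-k)}, the observable A acting on the k-th factor. -/
noncomputable def siteOp {d N : ℕ} (k : Fin N) (A : Matrix (Fin d) (Fin d) ℂ) :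
    Matrix (Fin N → Fin d) (Fin N → Fin d) ℂ :=
  Matrix.of fun f g => A (f k) (g k) * ∏ i ∈ Finset.univ.erase k, (if f i = g i then (1 : ℂ) else 0)

/-- Matrix element ⟨ψ₁|⊗⋯⊗⟨ψ_N| X |φ₁⟩⊗⋯⊗|φ_N⟩ on product vectors. -/
noncomputable def prodElem {d N : ℕ} (X : Matrix (Fin N → Fin d) (Fin N → Fin d) ℂ)
    (ψ φ : Fin N → Fin d → ℂ) : ℂ :=
  ∑ f : Fin N → Fin d, ∑ g : Fin N → Fin d,
    (starRingEnd ℂ) (∏ i, ψ i (f i)) * X f g * ∏ i, φ i (g i)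

/-! ### Auxiliary machinery -/

section Aux

variable {d N : ℕ}

/-- Evaluation of a matrix entry, as a linear map. -/
def entryLM (x y : Fin d) : Matrix (Fin d) (Fin d) ℂ →ₗ[ℂ] ℂ where
  toFun ρ := ρ x y
  map_add' _ _ := rfl
  map_smul' _ _ := rfl

/-- The multilinear map (ρ₁,…,ρ_N) ↦ Tr[X (ρ₁ ⊗ ⋯ ⊗ ρ_N)]. -/
noncomputable def Mmap (X : Matrix (Fin N → Fin d) (Fin N → Fin d) ℂ) :
    MultilinearMap ℂ (fun _ : Fin N => Matrix (Fin d) (Fin d) ℂ) ℂ :=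
  ∑ f : Fin N → Fin d, ∑ g : Fin N → Fin d,
    X f g • (MultilinearMap.mkPiAlgebra ℂ (Fin N) ℂ).compLinearMap fun i => entryLM (g i) (f i)

lemma Mmap_apply (X : Matrix (Fin N → Fin d) (Fin N → Fin d) ℂ)
    (ρ : Fin N → Matrix (Fin d) (Fin d) ℂ) :
    Mmap X ρ = ∑ f : Fin N → Fin d, ∑ g : Fin N → Fin d, X f g * ∏ i, (ρ i) (g i) (f i) := by
  simp [Mmap, entryLM, smul_eq_mul]
  rfl

lemma Mmap_diag (X : Matrix (Fin N → Fin d) (Fin N → Fin d) ℂ)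
    (ρ : Matrix (Fin d) (Fin d) ℂ) :
    Mmap X (fun _ => ρ) = (X * tensorPow ρ).trace := by
  simp [Mmap_apply, Matrix.trace, Matrix.mul_apply, tensorPow, Matrix.diag]

lemma Mmap_std (X : Matrix (Fin N → Fin d) (Fin N → Fin d) ℂ) (a b : Fin N → Fin d) :
    Mmap X (fun i => Matrix.single (b i) (a i) 1) = X a b := by
  rw [Mmap_apply]
  have key : ∀ f g : Fin N → Fin d,
      (∏ i, Matrix.single (b i) (a i) (1:ℂ) (g i) (f i))
        = if g = b ∧ f = a then 1 else 0 := by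
    intro f g
    simp only [Matrix.single, Matrix.of_apply]
    rw [Finset.prod_boole]
    simp [funext_iff, forall_and, eq_comm]
  simp only [key, mul_ite, mul_one, mul_zero, ite_and]
  simp [Finset.sum_ite_eq']

/-! ### Positive semidefiniteness and densities -/

lemma psd_real_smul {A : Matrix (Fin d) (Fin d) ℂ} (hA : A.PosSemidef)
    {c : ℝ} (hc : 0 ≤ c) : ((c : ℂ) • A).PosSemidef := by
  rw [Matrix.posSemidef_iff_dotProduct_mulVec]
  constructor
  · have h1 := hA.1
    unfold Matrix.IsHermitian at *
    rw [Matrix.conjTranspose_smul, h1]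
    simp [Complex.conj_ofReal]
  · intro x
    rw [Matrix.smul_mulVec, dotProduct_smul, smul_eq_mul]
    exact mul_nonneg (Complex.zero_le_real.mpr hc) (hA.dotProduct_mulVec_nonneg x)

lemma psd_outer (v : Fin d → ℂ) : (Matrix.vecMulVec v (star v)).PosSemidef := by
  rw [Matrix.posSemidef_iff_dotProduct_mulVec]
  constructor
  · ext x y
    simp [Matrix.conjTranspose_apply, Matrix.vecMulVec_apply, mul_comm]
  · intro x
    have hmv : (Matrix.vecMulVec v (star v)) *ᵥ x = (star v ⬝ᵥ x) • v := by
      ext i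
      rw [Pi.smul_apply, smul_eq_mul, dotProduct, Finset.sum_mul]
      simp only [Matrix.mulVec, Matrix.vecMulVec_apply, dotProduct, Pi.star_apply]
      exact Finset.sum_congr rfl fun _ _ => by ring
    have hs : star x ⬝ᵥ v = star (star v ⬝ᵥ x) := by
      simp only [dotProduct, Pi.star_apply, star_sum, star_mul', star_star]
      exact Finset.sum_congr rfl fun _ _ => by ring
    rw [hmv, dotProduct_smul, smul_eq_mul, hs]
    exact mul_star_self_nonneg _

lemma trace_outer (v : Fin d → ℂ) :
    (Matrix.vecMulVec v (star v)).trace = ∑ i, v i * star (v i) := by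
  simp [Matrix.trace, Matrix.vecMulVec_apply, Matrix.diag]

lemma single_density (p : Fin d) :
    IsDensity (Matrix.vecMulVec (Pi.single p 1) (star (Pi.single p 1))) := by
  refine ⟨psd_outer _, ?_⟩
  rw [trace_outer]
  simp [Pi.single_apply]

lemma outer_single_eq (p : Fin d) :
    Matrix.vecMulVec (Pi.single p 1) (star (Pi.single p 1 : Fin d → ℂ))
      = Matrix.single p p 1 := by
  ext i j
  by_cases hip : i = p <;> by_cases hjp : j = p <;>
    simp [Matrix.vecMulVec_apply, Matrix.single, Pi.single_apply, hip, hjp, eq_comm] <;>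
    first | simp [Ne.symm hjp] | simp [Ne.symm hip]

lemma outer_w1_eq (p q : Fin d) (hpq : p ≠ q) :
    Matrix.vecMulVec (Pi.single p 1 + Pi.single q 1)
        (star (Pi.single p 1 + Pi.single q 1 : Fin d → ℂ))
      = Matrix.single p p 1 + Matrix.single q q 1
        + Matrix.single p q 1 + Matrix.single q p 1 := by
  ext i j
  by_cases hip : i = p <;> by_cases hjp : j = p <;> by_cases hiq : i = q <;>
      by_cases hjq : j = q <;>
    first
      | exact absurd (hip.symm.trans hiq) hpq
      | exact absurd (hjp.symm.trans hjq) hpq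
      | (simp [Matrix.vecMulVec_apply, Matrix.single, Pi.single_apply,
          hip, hjp, hiq, hjq, hpq, eq_comm] <;> try simp_all [eq_comm])

lemma outer_w2_eq (p q : Fin d) (hpq : p ≠ q) :
    Matrix.vecMulVec (fun i => (Pi.single p 1 : Fin d → ℂ) i + Complex.I * (Pi.single q 1 : Fin d → ℂ) i)
        (star (fun i => (Pi.single p 1 : Fin d → ℂ) i + Complex.I * (Pi.single q 1 : Fin d → ℂ) i))
      = Matrix.single p p 1 + Matrix.single q q 1
        + (-Complex.I) • Matrix.single p q 1 + Complex.I • Matrix.single q p 1 := by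
  ext i j
  by_cases hip : i = p <;> by_cases hjp : j = p <;> by_cases hiq : i = q <;>
      by_cases hjq : j = q <;>
    first
      | exact absurd (hip.symm.trans hiq) hpq
      | exact absurd (hjp.symm.trans hjq) hpq
      | (simp [Matrix.vecMulVec_apply, Matrix.single, Pi.single_apply,
          hip, hjp, hiq, hjq, hpq, eq_comm, Complex.conj_I] <;> try simp_all [eq_comm])

/-- Every standard basis matrix is a `ℂ`-linear combination of four density matrices. -/
lemma stdBasis_decomp (p q : Fin d) :
    ∃ (c : Fin 4 → ℂ) (Dm : Fin 4 → Matrix (Fin d) (Fin d) ℂ),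
      (∀ k, IsDensity (Dm k)) ∧ Matrix.single p q 1 = ∑ k, c k • Dm k := by
  by_cases hpq : p = q
  · subst hpq
    refine ⟨![1, 0, 0, 0], fun _ => Matrix.vecMulVec (Pi.single p 1) (star (Pi.single p 1)),
      fun _ => single_density p, ?_⟩
    rw [Fin.sum_univ_four, outer_single_eq]
    simp
  · set w1 : Fin d → ℂ := Pi.single p 1 + Pi.single q 1 with hw1
    set w2 : Fin d → ℂ := fun i => (Pi.single p 1 : Fin d → ℂ) i
        + Complex.I * (Pi.single q 1 : Fin d → ℂ) i with hw2
    have hd1 : IsDensity ((((2:ℝ)⁻¹ : ℝ) : ℂ) • Matrix.vecMulVec w1 (star w1)) := by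
      refine ⟨psd_real_smul (psd_outer _) (by norm_num), ?_⟩
      rw [Matrix.trace_smul, hw1, outer_w1_eq p q hpq]
      simp [Matrix.trace_add, Ne.symm hpq, hpq]
      norm_num
    have hd2 : IsDensity ((((2:ℝ)⁻¹ : ℝ) : ℂ) • Matrix.vecMulVec w2 (star w2)) := by
      refine ⟨psd_real_smul (psd_outer _) (by norm_num), ?_⟩
      rw [Matrix.trace_smul, hw2, outer_w2_eq p q hpq]
      simp [Matrix.trace_add, Matrix.trace_smul, Ne.symm hpq, hpq]
      norm_num
    refine ⟨![-(1+Complex.I)/2, -(1+Complex.I)/2, 1, Complex.I],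
      ![Matrix.vecMulVec (Pi.single p 1) (star (Pi.single p 1)),
        Matrix.vecMulVec (Pi.single q 1) (star (Pi.single q 1)),
        (((2:ℝ)⁻¹ : ℝ) : ℂ) • Matrix.vecMulVec w1 (star w1),
        (((2:ℝ)⁻¹ : ℝ) : ℂ) • Matrix.vecMulVec w2 (star w2)], ?_, ?_⟩
    · intro k
      fin_cases k
      · exact single_density p
      · exact single_density q
      · exact hd1
      · exact hd2
    · rw [Fin.sum_univ_four]
      simp only [Matrix.cons_val_zero, Matrix.cons_val_one, Matrix.head_cons,
        Matrix.cons_val_two, Matrix.cons_val_three, Matrix.tail_cons]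
      rw [outer_single_eq p, outer_single_eq q, hw1, outer_w1_eq p q hpq, hw2,
        outer_w2_eq p q hpq]
      have h2 : (((2:ℝ)⁻¹ : ℝ) : ℂ) = (2:ℂ)⁻¹ := by push_cast; ring
      rw [h2]
      set A := Matrix.single p p (1:ℂ)
      set B := Matrix.single q q (1:ℂ)
      set C := Matrix.single p q (1:ℂ)
      set D := Matrix.single q p (1:ℂ)
      match_scalars <;> ring_nf <;> simp [Complex.I_sq] <;> ring_nf

lemma neg_one_pow_sub {m t : ℕ} (h : t ≤ m) : ((-1:ℂ))^(m - t) = (-1)^m * (-1)^t := by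
  have h1 : ((-1:ℂ))^(m - t) * (-1)^t = (-1)^m := by
    rw [← pow_add, Nat.sub_add_cancel h]
  have h2 : ((-1:ℂ))^t * (-1)^t = 1 := by
    rw [← mul_pow]; norm_num
  calc ((-1:ℂ))^(m-t) = ((-1:ℂ))^(m-t) * ((-1)^t * (-1)^t) := by rw [h2, mul_one]
    _ = (-1)^m * (-1)^t := by rw [← mul_assoc, h1]

lemma incl_excl {N : ℕ} (R : Finset (Fin N)) :
    ∑ S ∈ (univ : Finset (Fin N)).powerset, (if R ⊆ S then ((-1:ℂ))^(N - S.card) else 0)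
      = if R = univ then 1 else 0 := by
  rw [← Finset.sum_filter]
  have hbij : ∑ S ∈ (univ : Finset (Fin N)).powerset.filter (fun S => R ⊆ S),
      ((-1:ℂ))^(N - S.card)
      = ∑ T ∈ Rᶜ.powerset, ((-1:ℂ))^(N - (R ∪ T).card) := by
    refine Finset.sum_nbij' (fun S => S \ R) (fun T => R ∪ T) ?_ ?_ ?_ ?_ ?_
    · intro S hS
      simp only [Finset.mem_filter, Finset.mem_powerset] at hS
      simp only [Finset.mem_powerset]
      intro x hx
      simp only [Finset.mem_sdiff] at hx
      simp [Finset.mem_compl, hx.2]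
    · intro T hT
      simp only [Finset.mem_powerset] at hT ⊢
      simp only [Finset.mem_filter, Finset.mem_powerset]
      exact ⟨Finset.subset_univ _, Finset.subset_union_left⟩
    · intro S hS
      simp only [Finset.mem_filter, Finset.mem_powerset] at hS
      exact Finset.union_sdiff_of_subset hS.2
    · intro T hT
      simp only [Finset.mem_powerset] at hT
      apply Finset.union_sdiff_cancel_left
      exact Finset.disjoint_left.mpr fun a ha haT => (Finset.mem_compl.mp (hT haT)) ha
    · intro S hS
      simp only [Finset.mem_filter, Finset.mem_powerset] at hS
      rw [Finset.union_sdiff_of_subset hS.2]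
  rw [hbij]
  have hcard : ∀ T ∈ Rᶜ.powerset, (R ∪ T).card = R.card + T.card := by
    intro T hT
    simp only [Finset.mem_powerset] at hT
    rw [Finset.card_union_of_disjoint]
    exact Finset.disjoint_left.mpr fun a ha haT => (Finset.mem_compl.mp (hT haT)) ha
  rw [Finset.sum_congr rfl fun T hT => by rw [hcard T hT]]
  have hRc : Rᶜ.card = N - R.card := by
    rw [Finset.card_compl]; simp
  have hN : R.card ≤ N := by simpa using Finset.card_le_card (Finset.subset_univ R)
  have key : ∀ T ∈ Rᶜ.powerset, ((-1:ℂ))^(N - (R.card + T.card))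
      = (-1)^(Rᶜ.card) * (-1)^(T.card) := by
    intro T hT
    simp only [Finset.mem_powerset] at hT
    have hTc : T.card ≤ Rᶜ.card := Finset.card_le_card hT
    rw [show N - (R.card + T.card) = Rᶜ.card - T.card by omega]
    exact neg_one_pow_sub hTc
  rw [Finset.sum_congr rfl key, ← Finset.mul_sum]
  have hz : (∑ T ∈ Rᶜ.powerset, ((-1:ℂ))^(T.card)) = if Rᶜ = ∅ then 1 else 0 := by
    have h := Finset.sum_powerset_neg_one_pow_card (x := Rᶜ)
    have h2 : ((∑ T ∈ Rᶜ.powerset, ((-1:ℤ))^(T.card) : ℤ) : ℂ)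
        = ∑ T ∈ Rᶜ.powerset, ((-1:ℂ))^(T.card) := by push_cast; rfl
    rw [← h2, h]
    split <;> simp
  rw [hz]
  by_cases hR : R = univ
  · simp [hR]
  · have : Rᶜ ≠ ∅ := fun hc => hR ((compl_eq_empty_iff R).mp hc)
    simp [hR, this]


lemma perm_sum_zero (hN : 0 < N) (X : Matrix (Fin N → Fin d) (Fin N → Fin d) ℂ)
    (h : ∀ ρ : Matrix (Fin d) (Fin d) ℂ, IsDensity ρ → (X * tensorPow ρ).trace = 0)
    (ρ : Fin N → Matrix (Fin d) (Fin d) ℂ) (hρ : ∀ i, IsDensity (ρ i)) :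
    ∑ σ : Equiv.Perm (Fin N), Mmap X (fun i => ρ (σ i)) = 0 := by
  haveI : NeZero N := ⟨hN.ne'⟩
  -- Step 1: the diagonal vanishes on sums of densities
  have hF : ∀ S : Finset (Fin N), Mmap X (fun _ => ∑ i ∈ S, ρ i) = 0 := by
    intro S
    rcases S.eq_empty_or_nonempty with rfl | hS
    · simp only [Finset.sum_empty]
      exact (Mmap X).map_zero
    · have hcard : (0:ℝ) < S.card := by exact_mod_cast Finset.card_pos.mpr hS
      have hsum_psd : (∑ i ∈ S, ρ i).PosSemidef := by
        classical
        refine Finset.sum_induction ρ _ (fun a b ha hb => ha.add hb) ?_ (fun i _ => (hρ i).1)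
        exact Matrix.PosSemidef.zero
      set τ : Matrix (Fin d) (Fin d) ℂ := ((((S.card : ℝ))⁻¹ : ℝ) : ℂ) • ∑ i ∈ S, ρ i with hτ
      have hτd : IsDensity τ := by
        constructor
        · exact psd_real_smul hsum_psd (by positivity)
        · rw [hτ, Matrix.trace_smul, Matrix.trace_sum]
          rw [Finset.sum_congr rfl fun i _ => (hρ i).2]
          simp only [Finset.sum_const, nsmul_eq_mul, mul_one, smul_eq_mul]
          push_cast
          field_simp
      have hback : (∑ i ∈ S, ρ i) = ((S.card : ℂ)) • τ := by
        rw [hτ, smul_smul]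
        have : ((S.card : ℂ)) * (((S.card : ℝ))⁻¹ : ℝ) = 1 := by
          push_cast
          field_simp
        rw [this, one_smul]
      rw [hback]
      have := (Mmap X).map_smul_univ (fun _ => (S.card : ℂ)) (fun _ => τ)
      rw [show (fun _ : Fin N => (S.card : ℂ) • τ) = (fun i : Fin N => (fun _ : Fin N => (S.card : ℂ)) i • (fun _ : Fin N => τ) i) from rfl, this, Mmap_diag, h τ hτd, smul_zero]
  have expand : ∀ S : Finset (Fin N), Mmap X (fun _ => ∑ i ∈ S, ρ i)
      = ∑ r ∈ Fintype.piFinset (fun _ : Fin N => S), Mmap X (fun i => ρ (r i)) :=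
    fun S => (Mmap X).map_sum_finset (fun _ j => ρ j) (fun _ => S)
  calc ∑ σ : Equiv.Perm (Fin N), Mmap X (fun i => ρ (σ i))
      = ∑ r ∈ (univ : Finset (Fin N → Fin N)).filter Function.Bijective,
          Mmap X (fun i => ρ (r i)) := by
        refine Finset.sum_bij (fun (σ : Equiv.Perm (Fin N)) _ => (σ : Fin N → Fin N))
          ?_ ?_ ?_ ?_
        · intro σ _
          exact Finset.mem_filter.mpr ⟨Finset.mem_univ _, σ.bijective⟩
        · intro σ₁ _ σ₂ _ hσ
          exact Equiv.coe_fn_injective hσ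
        · intro r hr
          exact ⟨Equiv.ofBijective r (Finset.mem_filter.mp hr).2, Finset.mem_univ _, rfl⟩
        · intro σ _
          rfl
    _ = ∑ r : Fin N → Fin N,
          (if Finset.image r univ = univ then (1:ℂ) else 0) • Mmap X (fun i => ρ (r i)) := by
        rw [Finset.sum_filter]
        refine Finset.sum_congr rfl fun r _ => ?_
        have hiff : Function.Bijective r ↔ Finset.image r univ = univ := by
          constructor
          · intro hb
            refine Finset.eq_univ_iff_forall.mpr fun y => ?_
            rcases hb.2 y with ⟨x, rfl⟩
            exact Finset.mem_image_of_mem _ (Finset.mem_univ x)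
          · intro him
            have hsurj : Function.Surjective r := fun y => by
              have : y ∈ Finset.image r univ := by rw [him]; exact Finset.mem_univ y
              rcases Finset.mem_image.mp this with ⟨x, _, hx⟩
              exact ⟨x, hx⟩
            exact ⟨Finite.injective_iff_surjective.mpr hsurj, hsurj⟩
        rw [ite_smul, zero_smul, one_smul]
        exact if_congr hiff rfl rfl
    _ = ∑ r : Fin N → Fin N,
          (∑ S ∈ (univ : Finset (Fin N)).powerset,
            if Finset.image r univ ⊆ S then ((-1:ℂ))^(N - S.card) else 0)
            • Mmap X (fun i => ρ (r i)) := by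
        refine Finset.sum_congr rfl fun r _ => by rw [incl_excl]
    _ = ∑ S ∈ (univ : Finset (Fin N)).powerset, ∑ r : Fin N → Fin N,
          (if Finset.image r univ ⊆ S then ((-1:ℂ))^(N - S.card) else 0)
            • Mmap X (fun i => ρ (r i)) := by
        simp_rw [Finset.sum_smul]
        exact Finset.sum_comm
    _ = ∑ S ∈ (univ : Finset (Fin N)).powerset,
          ((-1:ℂ))^(N - S.card) • Mmap X (fun _ => ∑ i ∈ S, ρ i) := by
        refine Finset.sum_congr rfl fun S _ => ?_
        rw [expand S, Finset.smul_sum]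
        have hmem : ∀ r : Fin N → Fin N,
            (Finset.image r univ ⊆ S) ↔ r ∈ Fintype.piFinset (fun _ : Fin N => S) := by
          intro r
          rw [Fintype.mem_piFinset]
          constructor
          · intro hsub i
            exact hsub (Finset.mem_image_of_mem _ (Finset.mem_univ i))
          · intro hi x hx
            rcases Finset.mem_image.mp hx with ⟨i, _, rfl⟩
            exact hi i
        calc ∑ r : Fin N → Fin N,
              (if Finset.image r univ ⊆ S then ((-1:ℂ))^(N - S.card) else 0)
                • Mmap X (fun i => ρ (r i))
            = ∑ r : Fin N → Fin N,
              (if r ∈ Fintype.piFinset (fun _ : Fin N => S) then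
                ((-1:ℂ))^(N - S.card) • Mmap X (fun i => ρ (r i)) else 0) := by
              refine Finset.sum_congr rfl fun r _ => ?_
              rw [ite_smul, zero_smul]
              congr 1
              · exact propext (hmem r)
          _ = ∑ r ∈ Fintype.piFinset (fun _ : Fin N => S),
              ((-1:ℂ))^(N - S.card) • Mmap X (fun i => ρ (r i)) := by
              rw [Finset.sum_ite_mem, Finset.univ_inter]
    _ = 0 := Finset.sum_eq_zero fun S _ => by rw [hF S, smul_zero]
end Aux


/-- If Tr[X ρ^{⊗N}] = 0 for all density operators ρ, then the symmetrization
(1/N!)∑_σ Π_σ X Π_σ† of X vanishes. -/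
theorem symmetrization_eq_zero_of_averages_vanish
    {d N : ℕ} (hN : 0 < N)
    (X : Matrix (Fin N → Fin d) (Fin N → Fin d) ℂ)
    (h : ∀ ρ : Matrix (Fin d) (Fin d) ℂ, IsDensity ρ → (X * tensorPow ρ).trace = 0) :
    (N.factorial : ℂ)⁻¹ • ∑ σ : Equiv.Perm (Fin N), permAction σ X = 0 := by
  have hsum : ∑ σ : Equiv.Perm (Fin N), permAction σ X = 0 := by
    ext a b
    rw [Matrix.sum_apply, Matrix.zero_apply]
    choose c Dm hD hdec using fun i : Fin N => stdBasis_decomp (b i) (a i)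
    set L : MultilinearMap ℂ (fun _ : Fin N => Matrix (Fin d) (Fin d) ℂ) ℂ :=
      ∑ σ : Equiv.Perm (Fin N), (Mmap X).domDomCongr σ with hLdef
    have hLapply : ∀ ρ : Fin N → Matrix (Fin d) (Fin d) ℂ,
        L ρ = ∑ σ : Equiv.Perm (Fin N), Mmap X (fun i => ρ (σ i)) := by
      intro ρ
      rw [hLdef]
      rw [MultilinearMap.sum_apply]
      rfl
    have hEntry : ∑ σ : Equiv.Perm (Fin N), permAction σ X a b
        = L (fun i => Matrix.single (b i) (a i) 1) := by
      rw [hLapply]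
      refine Finset.sum_congr rfl fun σ _ => ?_
      exact (Mmap_std X (a ∘ σ) (b ∘ σ)).symm
    rw [hEntry]
    have hfun : (fun i => Matrix.single (b i) (a i) (1:ℂ))
        = fun i => ∑ k, c i k • Dm i k := funext hdec
    rw [hfun, L.map_sum]
    refine Finset.sum_eq_zero fun r _ => ?_
    have hsmul := L.map_smul_univ (fun i => c i (r i)) (fun i => Dm i (r i))
    rw [show (fun i => c i (r i) • Dm i (r i))
        = (fun i => (fun i => c i (r i)) i • (fun i => Dm i (r i)) i) from rfl, hsmul,
      hLapply, perm_sum_zero hN X h _ (fun i => hD i (r i)), smul_zero]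
  rw [hsum, smul_zero]
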